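/- Let f : ℝ → ℝ be smooth with f' nowhere flat, and let c ∈ ℝ be a local extremum of f' (i.e., there is δ > 0 with f'(x) ≤ f'(c) for all |x−c| < δ, or f'(x) ≥ f'(c) for all |x−c| < δ). Then there exists ε > 0 such that the only continuous 2π-periodic u : ℝ → ℝ with sup_t |u(t) − c| < ε, Φ_{f'∘u}(2π) = Φ_{p}(2π) and θ_{f'∘u}(2π) = θ_{p}(2π), where p is the constant function with value f'(c), is the constant function u ≡ c. (The constant c is an isolated point of its monodromy level set.) -/

import Mathlib

open Real Set Matrix

/-- A smooth function is nowhere flat if some derivative of order `r' ≤ r` (for a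
uniform `r`) is nonzero at every point. -/
def NowhereFlat (g : ℝ → ℝ) : Prop :=
  ∃ r : ℕ, 0 < r ∧ ∀ x : ℝ, ∃ r' : ℕ, 0 < r' ∧ r' ≤ r ∧ iteratedDeriv r' g x ≠ 0

/-- `Φ` is the fundamental matrix of the potential `q`: `Φ(0) = I` and
`Φ' = [[0,1],[q,0]]·Φ`. -/
def IsFundMatrix (q : ℝ → ℝ) (Φ : ℝ → Matrix (Fin 2) (Fin 2) ℝ) : Prop :=
  Φ 0 = 1 ∧
    ∀ t : ℝ, ∀ i j, HasDerivAt (fun s => Φ s i j) ((!![0, 1; q t, 0] * Φ t) i j) t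

/-- `θ` is the continuous argument lift on `[0,2π]` of the first row of `Φ`. -/
def IsArgLift (Φ : ℝ → Matrix (Fin 2) (Fin 2) ℝ) (θ : ℝ → ℝ) : Prop :=
  ContinuousOn θ (Icc 0 (2 * π)) ∧ θ 0 = 0 ∧
    ∀ t ∈ Icc (0:ℝ) (2 * π),
      Φ t 0 0 = Real.sqrt ((Φ t 0 0) ^ 2 + (Φ t 0 1) ^ 2) * Real.cos (θ t) ∧
      Φ t 0 1 = Real.sqrt ((Φ t 0 0) ^ 2 + (Φ t 0 1) ^ 2) * Real.sin (θ t)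



lemma zero_at_of_accum {F : ℝ → ℝ} (hF : Continuous F) (c : ℝ)
    (h : ∀ ε > (0:ℝ), ∃ x, 0 < |x - c| ∧ |x - c| < ε ∧ F x = 0) : F c = 0 := by
  by_contra hne
  have h1 : (0:ℝ) < |F c| := abs_pos.mpr hne
  obtain ⟨δ, hδ, hδ'⟩ := Metric.continuous_iff.mp hF c _ h1
  obtain ⟨x, _, hx2, hx3⟩ := h δ hδ
  have := hδ' x (by simpa [Real.dist_eq] using hx2)
  rw [hx3] at this
  simp [Real.dist_eq] at this

lemma accum_succ {F : ℝ → ℝ} (hF : Continuous F) (c : ℝ)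
    (h : ∀ ε > (0:ℝ), ∃ x, 0 < |x - c| ∧ |x - c| < ε ∧ F x = 0) :
    ∀ ε > (0:ℝ), ∃ x, 0 < |x - c| ∧ |x - c| < ε ∧ deriv F x = 0 := by
  intro ε hε
  have hFc : F c = 0 := zero_at_of_accum hF c h
  obtain ⟨x, hx1, hx2, hx3⟩ := h ε hε
  rw [abs_sub_lt_iff] at hx2
  rcases lt_or_gt_of_ne (fun h0 : x = c => by simp [h0] at hx1) with hlt | hgt
  · obtain ⟨y, ⟨hy1, hy2⟩, hy'⟩ := exists_deriv_eq_zero hlt hF.continuousOn (by rw [hx3, hFc])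
    exact ⟨y, abs_pos.mpr (sub_ne_zero.mpr hy2.ne), by
      rw [abs_sub_lt_iff]; constructor <;> linarith, hy'⟩
  · obtain ⟨y, ⟨hy1, hy2⟩, hy'⟩ := exists_deriv_eq_zero hgt hF.continuousOn (by rw [hx3, hFc])
    exact ⟨y, abs_pos.mpr (sub_ne_zero.mpr hy1.ne'), by
      rw [abs_sub_lt_iff]; constructor <;> linarith, hy'⟩

/-- Isolation of level values at a point where some iterated derivative is nonzero. -/
lemma isolated_level (g : ℝ → ℝ) (hg : ContDiff ℝ (⊤ : ℕ∞) g) (c : ℝ) (r' : ℕ) (hr : 0 < r')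
    (hd : iteratedDeriv r' g c ≠ 0) :
    ∃ ε > (0:ℝ), ∀ x, 0 < |x - c| → |x - c| < ε → g x ≠ g c := by
  by_contra hcon
  push_neg at hcon
  have hacc : ∀ ε > (0:ℝ), ∃ x, 0 < |x - c| ∧ |x - c| < ε ∧ g x - g c = 0 := by
    intro ε hε
    obtain ⟨x, hx1, hx2⟩ := hcon ε hε
    exact ⟨x, hx1, hx2.1, by rw [hx2.2]; ring⟩
  set h : ℝ → ℝ := fun x => g x - g c with hh
  have hch : ContDiff ℝ (⊤ : ℕ∞) h := hg.sub contDiff_const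
  have hcont : ∀ j : ℕ, Continuous (iteratedDeriv j h) := fun j =>
    hch.continuous_iteratedDeriv j (by exact_mod_cast le_top)
  have key : ∀ j : ℕ, ∀ ε > (0:ℝ), ∃ x, 0 < |x - c| ∧ |x - c| < ε ∧ iteratedDeriv j h x = 0 := by
    intro j
    induction j with
    | zero => simpa [iteratedDeriv_zero] using hacc
    | succ n ih =>
      have := accum_succ (hcont n) c ih
      simpa [iteratedDeriv_succ] using this
  have h0 : iteratedDeriv r' h c = 0 := zero_at_of_accum (hcont r') c (key r')
  have heq : iteratedDeriv r' h = iteratedDeriv r' g := by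
    obtain ⟨m, rfl⟩ := Nat.exists_eq_succ_of_ne_zero hr.ne'
    have hdh : deriv h = deriv g := funext fun x => deriv_sub_const _
    rw [iteratedDeriv_succ', iteratedDeriv_succ', hdh]
  rw [heq] at h0
  exact hd h0

lemma mul_entry0 (a : ℝ) (M : Matrix (Fin 2) (Fin 2) ℝ) (j : Fin 2) :
    (!![0, 1; a, 0] * M) 0 j = M 1 j := by
  simp [Matrix.mul_apply, Fin.sum_univ_two]

lemma mul_entry1 (a : ℝ) (M : Matrix (Fin 2) (Fin 2) ℝ) (j : Fin 2) :
    (!![0, 1; a, 0] * M) 1 j = a * M 0 j := by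
  simp [Matrix.mul_apply, Fin.sum_univ_two]

lemma fund_deriv0 {q : ℝ → ℝ} {Φ : ℝ → Matrix (Fin 2) (Fin 2) ℝ}
    (h : IsFundMatrix q Φ) (t : ℝ) (j : Fin 2) :
    HasDerivAt (fun s => Φ s 0 j) (Φ t 1 j) t := by
  have := h.2 t 0 j; rwa [mul_entry0] at this

lemma fund_deriv1 {q : ℝ → ℝ} {Φ : ℝ → Matrix (Fin 2) (Fin 2) ℝ}
    (h : IsFundMatrix q Φ) (t : ℝ) (j : Fin 2) :
    HasDerivAt (fun s => Φ s 1 j) (q t * Φ t 0 j) t := by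
  have := h.2 t 1 j; rwa [mul_entry1] at this

lemma fund_cont {q : ℝ → ℝ} {Φ : ℝ → Matrix (Fin 2) (Fin 2) ℝ}
    (h : IsFundMatrix q Φ) (i j : Fin 2) :
    Continuous (fun s => Φ s i j) :=
  continuous_iff_continuousAt.mpr fun t => (h.2 t i j).continuousAt

lemma fund_det {q : ℝ → ℝ} {Φ : ℝ → Matrix (Fin 2) (Fin 2) ℝ}
    (h : IsFundMatrix q Φ) (t : ℝ) :
    Φ t 0 0 * Φ t 1 1 - Φ t 0 1 * Φ t 1 0 = 1 := by
  set F : ℝ → ℝ := fun s => Φ s 0 0 * Φ s 1 1 - Φ s 0 1 * Φ s 1 0 with hF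
  have hder : ∀ s, HasDerivAt F 0 s := by
    intro s
    have h1 := ((fund_deriv0 h s 0).fun_mul (fund_deriv1 h s 1)).fun_sub
      ((fund_deriv0 h s 1).fun_mul (fund_deriv1 h s 0))
    convert h1 using 1 <;> first | rfl | ring
  have hconst : F t = F 0 :=
    is_const_of_deriv_eq_zero (fun x => (hder x).differentiableAt)
      (fun x => (hder x).deriv) t 0
  have : F 0 = 1 := by simp [hF, h.1, Matrix.one_apply]
  simpa [this] using hconst

lemma wronskian_int {q₀ : ℝ} {q : ℝ → ℝ} {Φp Φu : ℝ → Matrix (Fin 2) (Fin 2) ℝ}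
    (hq : Continuous q)
    (hp : IsFundMatrix (fun _ => q₀) Φp) (hu : IsFundMatrix q Φu)
    (hend : Φu (2*π) = Φp (2*π)) (j : Fin 2) :
    ∫ t in (0:ℝ)..(2*π), (q t - q₀) * (Φu t 0 j * Φp t 0 j) = 0 := by
  set W : ℝ → ℝ := fun s => Φu s 1 j * Φp s 0 j - Φu s 0 j * Φp s 1 j with hW
  have hder : ∀ s, HasDerivAt W ((q s - q₀) * (Φu s 0 j * Φp s 0 j)) s := by
    intro s
    have h1 := ((fund_deriv1 hu s j).fun_mul (fund_deriv0 hp s j)).fun_sub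
      ((fund_deriv0 hu s j).fun_mul (fund_deriv1 hp s j))
    convert h1 using 1 <;> first | rfl | ring
  have hint : IntervalIntegrable (fun s => (q s - q₀) * (Φu s 0 j * Φp s 0 j))
      MeasureTheory.volume 0 (2*π) :=
    ((hq.sub continuous_const).mul
      ((fund_cont hu 0 j).mul (fund_cont hp 0 j))).intervalIntegrable _ _
  have := intervalIntegral.integral_eq_sub_of_hasDerivAt (fun s _ => hder s) hint
  rw [this]
  have h0 : W 0 = 0 := by fin_cases j <;> simp [hW, hu.1, hp.1, Matrix.one_apply]
  have h2 : W (2*π) = 0 := by simp [hW, hend]; ring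
  rw [h0, h2, sub_zero]

lemma fund_close {q₀ : ℝ} {q : ℝ → ℝ} {Φp Φu : ℝ → Matrix (Fin 2) (Fin 2) ℝ}
    (hp : IsFundMatrix (fun _ => q₀) Φp) (hu : IsFundMatrix q Φu)
    {ε' Kp : ℝ} (hε' : 0 ≤ ε') (hε1 : ε' ≤ 1) (hKp : 0 ≤ Kp)
    (hPb : ∀ t ∈ Icc (0:ℝ) (2*π), ∀ i j : Fin 2, |Φp t i j| ≤ Kp)
    (hqd : ∀ t : ℝ, |q t - q₀| ≤ ε') :
    ∀ t ∈ Icc (0:ℝ) (2*π), ∀ i j : Fin 2,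
      |Φu t i j - Φp t i j| ≤ ε' * Kp / (|q₀| + 2) * (exp ((|q₀| + 2) * (2*π)) - 1) := by
  set K : ℝ := |q₀| + 2 with hK
  have hK1 : (1:ℝ) ≤ K := by simp only [hK]; linarith [abs_nonneg q₀]
  have hK0 : (0:ℝ) < K := by linarith
  set V : ℝ → (Fin 2 → Fin 2 → ℝ) := fun t i j => Φu t i j - Φp t i j with hV
  set V' : ℝ → (Fin 2 → Fin 2 → ℝ) := fun t =>
    ![V t 1, fun j => q t * V t 0 j + (q t - q₀) * Φp t 0 j] with hV'
  have hder : ∀ t, HasDerivAt V (V' t) t := by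
    intro t
    rw [hasDerivAt_pi]
    intro i
    rw [hasDerivAt_pi]
    intro j
    fin_cases i
    · simpa [hV, hV'] using (fund_deriv0 hu t j).fun_sub (fund_deriv0 hp t j)
    · have h1 := ((fund_deriv1 hu t j).sub (fund_deriv1 hp t j))
      have : q t * Φu t 0 j - q₀ * Φp t 0 j = V' t 1 j := by
        simp only [hV', hV, Matrix.cons_val_one, Matrix.head_cons, Matrix.cons_val_zero]; ring
      rw [this] at h1
      exact h1
  have hqb : ∀ t : ℝ, |q t| ≤ K := by
    intro t
    calc |q t| ≤ |q t - q₀| + |q₀| := by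
          have := abs_sub_abs_le_abs_sub (q t) q₀; linarith [abs_sub_abs_le_abs_sub (q t) q₀]
    _ ≤ K := by have := hqd t; simp [hK]; linarith
  have hbound : ∀ t ∈ Ico (0:ℝ) (2*π), ‖V' t‖ ≤ K * ‖V t‖ + ε' * Kp := by
    intro t ht
    have hVn : (0:ℝ) ≤ ‖V t‖ := norm_nonneg _
    have hrhs : (0:ℝ) ≤ K * ‖V t‖ + ε' * Kp := by positivity
    rw [pi_norm_le_iff_of_nonneg hrhs]
    intro i
    rw [pi_norm_le_iff_of_nonneg hrhs]
    intro j
    have hentry : ∀ (a b : Fin 2), |V t a b| ≤ ‖V t‖ :=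
      fun a b => (norm_le_pi_norm (V t a) b).trans (norm_le_pi_norm (V t) a)
    fin_cases i
    · have := hentry 1 j
      simp only [hV', Fin.zero_eta, Matrix.cons_val_zero, Real.norm_eq_abs]
      nlinarith [mul_nonneg hε' hKp]
    · simp only [hV', Fin.mk_one, Matrix.cons_val_one, Matrix.head_cons, Real.norm_eq_abs]
      have h1 : |q t * V t 0 j| ≤ K * ‖V t‖ := by
        rw [abs_mul]
        exact mul_le_mul (hqb t) (hentry 0 j) (abs_nonneg _) hK0.le
      have h2 : |(q t - q₀) * Φp t 0 j| ≤ ε' * Kp := by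
        rw [abs_mul]
        exact mul_le_mul (hqd t) (hPb t (Ico_subset_Icc_self ht) 0 j) (abs_nonneg _) hε'
      calc |q t * V t 0 j + (q t - q₀) * Φp t 0 j|
          ≤ |q t * V t 0 j| + |(q t - q₀) * Φp t 0 j| := abs_add_le _ _
        _ ≤ K * ‖V t‖ + ε' * Kp := add_le_add h1 h2
  have hV0 : ‖V 0‖ ≤ 0 := by
    have : V 0 = 0 := by
      funext i j
      simp [hV, hu.1, hp.1]
    rw [this, norm_zero]
  have hcont : ContinuousOn V (Icc 0 (2*π)) :=
    (continuous_pi fun i => continuous_pi fun j =>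
      (fund_cont hu i j).sub (fund_cont hp i j)).continuousOn
  have hmain := norm_le_gronwallBound_of_norm_deriv_right_le hcont
    (fun t _ => (hder t).hasDerivWithinAt) hV0 hbound
  intro t ht i j
  have h1 : |Φu t i j - Φp t i j| ≤ ‖V t‖ :=
    (norm_le_pi_norm (V t i) j).trans (norm_le_pi_norm (V t) i)
  have h2 := hmain t ht
  rw [sub_zero, gronwallBound_of_K_ne_0 hK0.ne'] at h2
  have hexp : exp (K * t) - 1 ≤ exp (K * (2*π)) - 1 := by
    have : K * t ≤ K * (2*π) := mul_le_mul_of_nonneg_left ht.2 hK0.le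
    linarith [Real.exp_le_exp.mpr this]
  have hcoef : (0:ℝ) ≤ ε' * Kp / K := by positivity
  calc |Φu t i j - Φp t i j| ≤ ‖V t‖ := h1
    _ ≤ 0 * exp (K * t) + ε' * Kp / K * (exp (K * t) - 1) := h2
    _ ≤ ε' * Kp / K * (exp (K * (2*π)) - 1) := by
        rw [zero_mul, zero_add]
        exact mul_le_mul_of_nonneg_left hexp hcoef

lemma key_const {q₀ : ℝ} {q : ℝ → ℝ} {Φp Φu : ℝ → Matrix (Fin 2) (Fin 2) ℝ}
    (hq : Continuous q)
    (hp : IsFundMatrix (fun _ => q₀) Φp) (hu : IsFundMatrix q Φu)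
    (hend : Φu (2*π) = Φp (2*π)) {s : ℝ} (hs : s ≠ 0)
    (hsign : ∀ t : ℝ, 0 ≤ s * (q t - q₀))
    (hip : ∀ t ∈ Icc (0:ℝ) (2*π),
      0 < Φu t 0 0 * Φp t 0 0 + Φu t 0 1 * Φp t 0 1) :
    ∀ t ∈ Icc (0:ℝ) (2*π), q t = q₀ := by
  have h2π : (0:ℝ) < 2*π := by positivity
  set ip : ℝ → ℝ := fun t => Φu t 0 0 * Φp t 0 0 + Φu t 0 1 * Φp t 0 1 with hipd
  have hipc : Continuous ip :=
    ((fund_cont hu 0 0).mul (fund_cont hp 0 0)).add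
      ((fund_cont hu 0 1).mul (fund_cont hp 0 1))
  have hint0 : ∀ j : Fin 2, IntervalIntegrable
      (fun t => (q t - q₀) * (Φu t 0 j * Φp t 0 j)) MeasureTheory.volume 0 (2*π) :=
    fun j => ((hq.sub continuous_const).mul
      ((fund_cont hu 0 j).mul (fund_cont hp 0 j))).intervalIntegrable _ _
  have hI : ∫ t in (0:ℝ)..(2*π), s * ((q t - q₀) * ip t) = 0 := by
    have heq : (fun t => (q t - q₀) * ip t) =
        fun t => (q t - q₀) * (Φu t 0 0 * Φp t 0 0) + (q t - q₀) * (Φu t 0 1 * Φp t 0 1) := by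
      funext t; simp only [hipd]; ring
    rw [intervalIntegral.integral_const_mul, heq,
      intervalIntegral.integral_add (hint0 0) (hint0 1),
      wronskian_int hq hp hu hend 0, wronskian_int hq hp hu hend 1]
    ring
  intro t ht
  by_contra hne
  have hpos : 0 < s * (q t - q₀) * ip t := by
    have h1 := hsign t
    have h2 : s * (q t - q₀) ≠ 0 := mul_ne_zero hs (sub_ne_zero.mpr hne)
    exact mul_pos (h1.lt_of_ne (Ne.symm h2)) (hip t ht)
  have hgc : ContinuousOn (fun t => s * (q t - q₀) * ip t) (Icc 0 (2*π)) :=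
    ((continuous_const.mul (hq.sub continuous_const)).mul hipc).continuousOn
  have hnonneg : ∀ x ∈ Ioc (0:ℝ) (2*π), 0 ≤ s * (q x - q₀) * ip x := by
    intro x hx
    exact mul_nonneg (hsign x) (hip x ⟨hx.1.le, hx.2⟩).le
  have := intervalIntegral.integral_pos h2π hgc hnonneg ⟨t, ht, hpos⟩
  rw [show (fun t => s * (q t - q₀) * ip t) = fun t => s * ((q t - q₀) * ip t) by
    funext t; ring] at this
  rw [hI] at this
  exact lt_irrefl 0 this

lemma neg_prod_le {x y a b : ℝ} (hx : |x| ≤ a) (hy : |y| ≤ b) : -(a * b) ≤ x * y := by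
  have h1 : |x * y| ≤ a * b := by
    rw [abs_mul]
    exact mul_le_mul hx hy (abs_nonneg _) ((abs_nonneg x).trans hx)
  linarith [neg_abs_le (x * y)]

/-- Proposition 3.1(b), second case. If `c` is a local extremum of the
nowhere flat derivative `f'`, then the constant function `c` is an isolated point of its
level set of the lifted monodromy (the pair `(Φ(2π), θ(2π))`). -/
theorem stmt_8 (f : ℝ → ℝ) (hf : ContDiff ℝ (⊤ : ℕ∞) f) (hnf : NowhereFlat (deriv f))
    (c : ℝ)
    (hext : (∃ δ > 0, ∀ x : ℝ, |x - c| < δ → deriv f x ≤ deriv f c) ∨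
            (∃ δ > 0, ∀ x : ℝ, |x - c| < δ → deriv f c ≤ deriv f x))
    -- `Φp`, `θp`: fundamental matrix and argument lift for the constant
    -- potential `p ≡ f'(c)`:
    (Φp : ℝ → Matrix (Fin 2) (Fin 2) ℝ) (θp : ℝ → ℝ)
    (hΦp : IsFundMatrix (fun _ => deriv f c) Φp) (hθp : IsArgLift Φp θp) :
    ∃ ε > 0, ∀ u : ℝ → ℝ, Continuous u → Function.Periodic u (2 * π) →
      (∀ t : ℝ, |u t - c| < ε) →
      ∀ Φu : ℝ → Matrix (Fin 2) (Fin 2) ℝ, ∀ θu : ℝ → ℝ,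
        IsFundMatrix (fun t => deriv f (u t)) Φu → IsArgLift Φu θu →
        Φu (2 * π) = Φp (2 * π) → θu (2 * π) = θp (2 * π) →
        u = fun _ => c := by
  have h2π : (0:ℝ) < 2*π := by positivity
  set q₀ : ℝ := deriv f c with hq₀
  -- smoothness and continuity of f'
  have hg : ContDiff ℝ (⊤ : ℕ∞) (deriv f) := (contDiff_infty_iff_deriv.mp hf).2
  have hgc : Continuous (deriv f) := hf.continuous_deriv (by exact_mod_cast le_top)
  -- isolation radius
  obtain ⟨r, hr0, hrall⟩ := hnf
  obtain ⟨r', hr'0, _, hdc⟩ := hrall c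
  obtain ⟨ε₀, hε₀, hiso⟩ := isolated_level (deriv f) hg c r' hr'0 hdc
  -- sign and δ
  obtain ⟨δ, hδ, s, hs, hsgn⟩ :
      ∃ δ > (0:ℝ), ∃ s : ℝ, s ≠ 0 ∧ ∀ x : ℝ, |x - c| < δ → 0 ≤ s * (deriv f x - q₀) := by
    rcases hext with ⟨δ, hδ, hsign⟩ | ⟨δ, hδ, hsign⟩
    · exact ⟨δ, hδ, -1, by norm_num, fun x hx => by have := hsign x hx; nlinarith⟩
    · exact ⟨δ, hδ, 1, by norm_num, fun x hx => by have := hsign x hx; nlinarith⟩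
  -- bound on the entries of Φp on [0, 2π]
  obtain ⟨C, hC⟩ := isCompact_Icc.exists_bound_of_continuousOn
    (f := fun t => (fun i j => Φp t i j : Fin 2 → Fin 2 → ℝ))
    ((continuous_pi fun i => continuous_pi fun j => fund_cont hΦp i j).continuousOn)
  set Kp : ℝ := max C 1 with hKpd
  have hKp1 : (1:ℝ) ≤ Kp := le_max_right _ _
  have hKp0 : (0:ℝ) ≤ Kp := by linarith
  have hPb : ∀ t ∈ Icc (0:ℝ) (2*π), ∀ i j : Fin 2, |Φp t i j| ≤ Kp := by
    intro t ht i j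
    have h1 : |Φp t i j| ≤ ‖(fun i j => Φp t i j : Fin 2 → Fin 2 → ℝ)‖ :=
      (norm_le_pi_norm (fun j => Φp t i j) j).trans
        (norm_le_pi_norm (fun i j => Φp t i j : Fin 2 → Fin 2 → ℝ) i)
    exact h1.trans ((hC t ht).trans (le_max_left _ _))
  -- positive lower bound for the squared norm of the first row of Φp
  obtain ⟨t₀, ht₀, hmin⟩ := isCompact_Icc.exists_isMinOn (α := ℝ)
    (⟨0, by constructor <;> [exact le_refl 0; positivity]⟩ : (Icc (0:ℝ) (2*π)).Nonempty)
    (((fund_cont hΦp 0 0).mul (fund_cont hΦp 0 0)).add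
      ((fund_cont hΦp 0 1).mul (fund_cont hΦp 0 1))).continuousOn
  set m : ℝ := Φp t₀ 0 0 * Φp t₀ 0 0 + Φp t₀ 0 1 * Φp t₀ 0 1 with hmd
  have hm0 : 0 < m := by
    rcases lt_or_ge 0 m with h | h
    · exact h
    · exfalso
      have ha2 : Φp t₀ 0 0 * Φp t₀ 0 0 = 0 := by nlinarith [mul_self_nonneg (Φp t₀ 0 0), mul_self_nonneg (Φp t₀ 0 1)]
      have hb2 : Φp t₀ 0 1 * Φp t₀ 0 1 = 0 := by nlinarith [mul_self_nonneg (Φp t₀ 0 0), mul_self_nonneg (Φp t₀ 0 1)]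
      have ha : Φp t₀ 0 0 = 0 := by nlinarith [mul_self_nonneg (Φp t₀ 0 0)]
      have hb : Φp t₀ 0 1 = 0 := by nlinarith [mul_self_nonneg (Φp t₀ 0 1)]
      have := fund_det hΦp t₀
      rw [ha, hb] at this
      norm_num at this
  have hmle : ∀ t ∈ Icc (0:ℝ) (2*π), m ≤ Φp t 0 0 * Φp t 0 0 + Φp t 0 1 * Φp t 0 1 :=
    fun t ht => hmin ht
  -- the Gronwall constant
  set Cst : ℝ := Kp / (|q₀| + 2) * (exp ((|q₀| + 2) * (2*π)) - 1) with hCst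
  have hCst0 : 0 ≤ Cst := by
    have h1 : (1:ℝ) ≤ exp ((|q₀| + 2) * (2*π)) := by
      rw [show (1:ℝ) = exp 0 by simp]
      apply exp_le_exp.mpr
      positivity
    have h2 : (0:ℝ) ≤ Kp / (|q₀| + 2) := by positivity
    nlinarith
  -- choice of ε'
  set ε' : ℝ := min 1 (m / (4 * Kp * Cst + 1)) with hε'd
  have hε'0 : 0 < ε' := by
    apply lt_min one_pos
    apply div_pos hm0
    nlinarith
  have hε'1 : ε' ≤ 1 := min_le_left _ _
  have hsmall : 2 * Kp * (ε' * Cst) < m := by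
    have h1 : ε' ≤ m / (4 * Kp * Cst + 1) := min_le_right _ _
    have h2 : 0 < 4 * Kp * Cst + 1 := by nlinarith
    have h3 : ε' * (4 * Kp * Cst + 1) ≤ m := (le_div_iff₀ h2).mp h1
    nlinarith
  -- choice of ε
  obtain ⟨ε₁, hε₁, hball⟩ := Metric.continuous_iff.mp hgc c ε' hε'0
  refine ⟨min ε₁ (min ε₀ δ), by positivity, ?_⟩
  intro u hu hper hclose Φu θu hΦu hθu hΦend hθend
  set q : ℝ → ℝ := fun t => deriv f (u t) with hqd
  have hq : Continuous q := hgc.comp hu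
  have hqdist : ∀ t : ℝ, |q t - q₀| ≤ ε' := by
    intro t
    have h1 : |u t - c| < ε₁ := (hclose t).trans_le (min_le_left _ _)
    have := hball (u t) (by simpa [Real.dist_eq] using h1)
    rw [Real.dist_eq] at this
    exact this.le
  have hsign : ∀ t : ℝ, 0 ≤ s * (q t - q₀) := by
    intro t
    exact hsgn (u t) ((hclose t).trans_le ((min_le_right _ _).trans (min_le_right _ _)))
  -- Gronwall closeness
  have hgron := fund_close hΦp hΦu hε'0.le hε'1 hKp0 hPb hqdist
  -- positivity of the inner product of first rows
  have hip : ∀ t ∈ Icc (0:ℝ) (2*π),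
      0 < Φu t 0 0 * Φp t 0 0 + Φu t 0 1 * Φp t 0 1 := by
    intro t ht
    have hB : ε' * Kp / (|q₀| + 2) * (exp ((|q₀| + 2) * (2*π)) - 1) = ε' * Cst := by
      rw [hCst]; ring
    have h00 := hgron t ht 0 0
    have h01 := hgron t ht 0 1
    rw [hB] at h00 h01
    have hp00 := hPb t ht 0 0
    have hp01 := hPb t ht 0 1
    have e1 : -(ε' * Cst * Kp) ≤ (Φu t 0 0 - Φp t 0 0) * Φp t 0 0 := neg_prod_le h00 hp00
    have e2 : -(ε' * Cst * Kp) ≤ (Φu t 0 1 - Φp t 0 1) * Φp t 0 1 := neg_prod_le h01 hp01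
    have e3 := hmle t ht
    have hsmall2 : ε' * Cst * Kp + ε' * Cst * Kp < m := by
      have h4 : 2 * Kp * (ε' * Cst) = ε' * Cst * Kp + ε' * Cst * Kp := by ring
      linarith [hsmall]
    have expand : Φu t 0 0 * Φp t 0 0 + Φu t 0 1 * Φp t 0 1 =
        (Φp t 0 0 * Φp t 0 0 + Φp t 0 1 * Φp t 0 1) +
          ((Φu t 0 0 - Φp t 0 0) * Φp t 0 0 + (Φu t 0 1 - Φp t 0 1) * Φp t 0 1) := by ring
    rw [expand]
    linarith
  -- conclude q ≡ q₀ on [0, 2π]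
  have hqeq := key_const hq hΦp hΦu hΦend hs hsign hip
  -- conclude u ≡ c on [0, 2π]
  have huc : ∀ t ∈ Icc (0:ℝ) (2*π), u t = c := by
    intro t ht
    by_contra hne
    have h1 : 0 < |u t - c| := abs_pos.mpr (sub_ne_zero.mpr hne)
    have h2 : |u t - c| < ε₀ :=
      (hclose t).trans_le ((min_le_right _ _).trans (min_le_left _ _))
    exact hiso (u t) h1 h2 (hqeq t ht)
  -- extend by periodicity
  funext t
  obtain ⟨y, hy, hy'⟩ := hper.exists_mem_Ico₀ h2π t
  rw [hy']
  exact huc y ⟨hy.1, hy.2.le⟩
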